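/- Let T ⊆ S^d be a subspace and C(W)* = { Σᵢ Wᵢ Xᵢ Wᵢᵀ : Xᵢ ∈ S^k_+ } for d×k matrices W_1,...,W_m. If X* = Σᵢ Wᵢ Xᵢ* Wᵢᵀ maximizes Σᵢ rank(Xᵢ) over T ∩ C(W)*, then X* maximizes rank(X) over T ∩ C(W)*; in fact null(X*) ⊆ null(X) for every X ∈ T ∩ C(W)*. -/

import Mathlib

open Matrix

private lemma rank_le_of_ker_le {n : ℕ} {A B : Matrix (Fin n) (Fin n) ℝ}
    (h : LinearMap.ker A.mulVecLin ≤ LinearMap.ker B.mulVecLin) : B.rank ≤ A.rank := by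
  have hA := LinearMap.finrank_range_add_finrank_ker A.mulVecLin
  have hB := LinearMap.finrank_range_add_finrank_ker B.mulVecLin
  have hk := Submodule.finrank_mono h
  simp only [Module.finrank_fin_fun] at hA hB
  rw [Matrix.rank, Matrix.rank]
  omega

private lemma sum_mulVec' {n p q : ℕ} (M : Fin q → Matrix (Fin n) (Fin p) ℝ) (v : Fin p → ℝ) :
    (∑ i, M i) *ᵥ v = ∑ i, M i *ᵥ v := by
  ext j
  simp only [Matrix.mulVec, dotProduct, Finset.sum_apply, Matrix.sum_apply,
    Finset.sum_mul]
  rw [Finset.sum_comm]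

private lemma psd_ker_add {n : ℕ} {A B : Matrix (Fin n) (Fin n) ℝ}
    (hA : A.PosSemidef) (hB : B.PosSemidef) {v : Fin n → ℝ}
    (hv : (A + B) *ᵥ v = 0) : A *ᵥ v = 0 ∧ B *ᵥ v = 0 := by
  have h1 : 0 ≤ v ⬝ᵥ A *ᵥ v := by simpa using hA.dotProduct_mulVec_nonneg v
  have h2 : 0 ≤ v ⬝ᵥ B *ᵥ v := by simpa using hB.dotProduct_mulVec_nonneg v
  have hsum : v ⬝ᵥ A *ᵥ v + v ⬝ᵥ B *ᵥ v = 0 := by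
    rw [← dotProduct_add, ← Matrix.add_mulVec, hv, dotProduct_zero]
  have hA0 : v ⬝ᵥ A *ᵥ v = 0 := le_antisymm (by linarith) h1
  have hB0 : v ⬝ᵥ B *ᵥ v = 0 := le_antisymm (by linarith) h2
  exact ⟨(hA.dotProduct_mulVec_zero_iff v).mp (by simpa using hA0),
    (hB.dotProduct_mulVec_zero_iff v).mp (by simpa using hB0)⟩

theorem max_sum_rank_implies_max_rank
    {d k m : ℕ} (W : Fin m → Matrix (Fin d) (Fin k) ℝ)
    (T : Submodule ℝ (Matrix (Fin d) (Fin d) ℝ))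
    (Xstar : Matrix (Fin d) (Fin d) ℝ)
    (Xis : Fin m → Matrix (Fin k) (Fin k) ℝ)
    (hXT : Xstar ∈ T)
    (hXis : ∀ i, (Xis i).PosSemidef)
    (hdecomp : Xstar = ∑ i, W i * Xis i * (W i)ᵀ)
    (hmax : ∀ X ∈ T, ∀ Xi : Fin m → Matrix (Fin k) (Fin k) ℝ,
      (∀ i, (Xi i).PosSemidef) → X = ∑ i, W i * Xi i * (W i)ᵀ →
        ∑ i, (Xi i).rank ≤ ∑ i, (Xis i).rank) :
    ∀ X ∈ T, ∀ Xi : Fin m → Matrix (Fin k) (Fin k) ℝ,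
      (∀ i, (Xi i).PosSemidef) → X = ∑ i, W i * Xi i * (W i)ᵀ →
        LinearMap.ker Xstar.mulVecLin ≤ LinearMap.ker X.mulVecLin ∧
        X.rank ≤ Xstar.rank := by
  intro X hX Xi hXi hXd
  -- consider Y = Xstar + X with coefficients Xis i + Xi i
  have hYpsd : ∀ i, (Xis i + Xi i).PosSemidef := fun i => (hXis i).add (hXi i)
  have hYdec : Xstar + X = ∑ i, W i * (Xis i + Xi i) * (W i)ᵀ := by
    rw [hdecomp, hXd, ← Finset.sum_add_distrib]
    refine Finset.sum_congr rfl fun i _ => ?_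
    rw [Matrix.mul_add, Matrix.add_mul]
  have hsum := hmax (Xstar + X) (T.add_mem hXT hX) (fun i => Xis i + Xi i) hYpsd hYdec
  -- termwise kernel inclusion ker (Xis i + Xi i) ≤ ker (Xis i)
  have hkerle : ∀ i, LinearMap.ker (Xis i + Xi i).mulVecLin ≤
      LinearMap.ker (Xis i).mulVecLin := by
    intro i v hv
    simp only [LinearMap.mem_ker, mulVecLin_apply] at hv ⊢
    exact (psd_ker_add (hXis i) (hXi i) hv).1
  have hrle : ∀ i ∈ Finset.univ, (Xis i).rank ≤ (Xis i + Xi i).rank :=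
    fun i _ => rank_le_of_ker_le (hkerle i)
  have heq : ∀ i ∈ Finset.univ, (Xis i).rank = (Xis i + Xi i).rank := by
    rw [← Finset.sum_eq_sum_iff_of_le hrle]
    exact le_antisymm (Finset.sum_le_sum hrle) hsum
  -- hence ker (Xis i) ≤ ker (Xi i)
  have hker : ∀ i, LinearMap.ker (Xis i).mulVecLin ≤ LinearMap.ker (Xi i).mulVecLin := by
    intro i
    have hk1 := LinearMap.finrank_range_add_finrank_ker (Xis i).mulVecLin
    have hk2 := LinearMap.finrank_range_add_finrank_ker (Xis i + Xi i).mulVecLin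
    simp only [Module.finrank_fin_fun] at hk1 hk2
    have hre := heq i (Finset.mem_univ i)
    rw [Matrix.rank, Matrix.rank] at hre
    have hkeq : LinearMap.ker (Xis i + Xi i).mulVecLin = LinearMap.ker (Xis i).mulVecLin :=
      Submodule.eq_of_le_of_finrank_le (hkerle i) (by omega)
    rw [← hkeq]
    intro v hv
    simp only [LinearMap.mem_ker, mulVecLin_apply] at hv ⊢
    exact (psd_ker_add (hXis i) (hXi i) hv).2
  -- main kernel inclusion
  have hmain : LinearMap.ker Xstar.mulVecLin ≤ LinearMap.ker X.mulVecLin := by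
    intro v hv
    simp only [LinearMap.mem_ker, mulVecLin_apply] at hv ⊢
    -- each quadratic term vanishes
    have hquad : ∀ i, v ⬝ᵥ (W i * Xis i * (W i)ᵀ) *ᵥ v =
        ((W i)ᵀ *ᵥ v) ⬝ᵥ (Xis i) *ᵥ ((W i)ᵀ *ᵥ v) := by
      intro i
      rw [← Matrix.mulVec_mulVec, ← Matrix.mulVec_mulVec, dotProduct_mulVec,
        ← Matrix.mulVec_transpose]
    have hzero : ∑ i, v ⬝ᵥ (W i * Xis i * (W i)ᵀ) *ᵥ v = 0 := by
      have h' : v ⬝ᵥ ∑ i, (W i * Xis i * (W i)ᵀ) *ᵥ v = 0 := by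
        rw [← sum_mulVec', ← hdecomp, hv, dotProduct_zero]
      rw [← h']
      simp only [dotProduct, Finset.sum_apply, Finset.mul_sum]
      rw [Finset.sum_comm]
    have hterm : ∀ i ∈ Finset.univ, v ⬝ᵥ (W i * Xis i * (W i)ᵀ) *ᵥ v = 0 := by
      rw [← Finset.sum_eq_zero_iff_of_nonneg]
      · exact hzero
      · intro i _
        rw [hquad i]
        simpa using (hXis i).dotProduct_mulVec_nonneg ((W i)ᵀ *ᵥ v)
    have hXiv : ∀ i, Xi i *ᵥ ((W i)ᵀ *ᵥ v) = 0 := by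
      intro i
      have h0 : Xis i *ᵥ ((W i)ᵀ *ᵥ v) = 0 := by
        apply ((hXis i).dotProduct_mulVec_zero_iff ((W i)ᵀ *ᵥ v)).mp
        have := hterm i (Finset.mem_univ i)
        rw [hquad i] at this
        simpa only [star_trivial] using this
      have := hker i (by simpa only [LinearMap.mem_ker, mulVecLin_apply] using h0)
      simpa only [LinearMap.mem_ker, mulVecLin_apply] using this
    rw [hXd, sum_mulVec']
    apply Finset.sum_eq_zero
    intro i _
    rw [← Matrix.mulVec_mulVec, ← Matrix.mulVec_mulVec, hXiv i, Matrix.mulVec_zero]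
  exact ⟨hmain, rank_le_of_ker_le hmain⟩
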